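/- Discrete variational characterization of the Maxwell equations: let V be a finite type and let w : V → V → V → ℝ be a weight function that is invariant under all permutations of its three arguments. For an antisymmetric discrete 1-form A : V → V → ℝ (A(u,v) = −A(v,u) for all u, v), define dA(u,v,x) = A(v,x) − A(u,x) + A(u,v) and the discrete action S(A) = (1/12) Σ_{u ∈ V} Σ_{v ∈ V} Σ_{x ∈ V} w(u,v,x) (dA(u,v,x))². Then for every antisymmetric A and every pair of distinct vertices a, b ∈ V, the derivative at ε = 0 of the function ε ↦ S(A + ε η_{ab}) equals Σ_{x ∈ V} w(a,b,x) dA(a,b,x), where η_{ab} is the elementary antisymmetric 1-form with η_{ab}(a,b) = 1, η_{ab}(b,a) = −1, and value 0 on all other pairs. Consequently, A is a critical point of S (all such directional derivatives vanish) if and only if Σ_{x ∈ V} w(a,b,x) dA(a,b,x) = 0 for every pair of distinct vertices a, b, which is the discrete Maxwell equation ∗d∗dA = 0 in weighted-cochain form. -/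

import Mathlib

open Finset

/-- Discrete variational characterization of the Maxwell equations: for a
finite vertex set `V`, a weight function `w` invariant under all permutations
of its three arguments, an antisymmetric discrete 1-form `A` with coboundary
`dA(u,v,x) = A(v,x) − A(u,x) + A(u,v)`, and the discrete action
`S(A) = (1/12) ∑_u ∑_v ∑_x w(u,v,x) (dA(u,v,x))²`, the derivative at `ε = 0`
of `ε ↦ S(A + ε η_{ab})` (for distinct `a, b`, with `η_{ab}` the elementary
antisymmetric 1-form) equals `∑_x w(a,b,x) dA(a,b,x)`; consequently `A` is a
critical point of `S` iff `∑_x w(a,b,x) dA(a,b,x) = 0` for all distinct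
`a, b`, i.e. the discrete Maxwell equation `∗d∗dA = 0` holds. -/
theorem discrete_maxwell_variational {V : Type*} [Fintype V] [DecidableEq V]
    (w : V → V → V → ℝ)
    (hw₁ : ∀ u v x : V, w u v x = w v u x)
    (hw₂ : ∀ u v x : V, w u v x = w u x v) :
    let dd : (V → V → ℝ) → V → V → V → ℝ :=
      fun A u v x => A v x - A u x + A u v
    let S : (V → V → ℝ) → ℝ :=
      fun A => (1 / 12) * ∑ u : V, ∑ v : V, ∑ x : V, w u v x * (dd A u v x) ^ 2
    let η : V → V → V → V → ℝ :=
      fun a b u v =>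
        if u = a ∧ v = b then 1 else if u = b ∧ v = a then -1 else 0
    (∀ A : V → V → ℝ, (∀ u v : V, A u v = - A v u) →
        ∀ a b : V, a ≠ b →
          deriv (fun ε : ℝ =>
            S (fun u v => A u v + ε * η a b u v)) 0
            = ∑ x : V, w a b x * dd A a b x) ∧
    (∀ A : V → V → ℝ, (∀ u v : V, A u v = - A v u) →
        ((∀ a b : V, a ≠ b →
            deriv (fun ε : ℝ =>
              S (fun u v => A u v + ε * η a b u v)) 0 = 0)
          ↔ (∀ a b : V, a ≠ b → ∑ x : V, w a b x * dd A a b x = 0))) := by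
  intro dd S η
  have key : ∀ A : V → V → ℝ, (∀ u v : V, A u v = - A v u) →
      ∀ a b : V, a ≠ b →
        deriv (fun ε : ℝ =>
          S (fun u v => A u v + ε * η a b u v)) 0
          = ∑ x : V, w a b x * dd A a b x := by
    intro A hA a b hab
    set L : ℝ := (1/12) * ∑ u : V, ∑ v : V, ∑ x : V,
        2 * w u v x * dd A u v x * dd (η a b) u v x with hL
    set Q : ℝ := (1/12) * ∑ u : V, ∑ v : V, ∑ x : V,
        w u v x * (dd (η a b) u v x) ^ 2 with hQ
    have hfun : (fun ε : ℝ => S (fun u v => A u v + ε * η a b u v))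
        = fun ε : ℝ => S A + ε * L + ε ^ 2 * Q := by
      funext ε
      have expand : ∀ u v x : V,
          w u v x * (dd (fun u v => A u v + ε * η a b u v) u v x) ^ 2
            = w u v x * (dd A u v x) ^ 2
              + ε * (2 * w u v x * dd A u v x * dd (η a b) u v x)
              + ε ^ 2 * (w u v x * (dd (η a b) u v x) ^ 2) := by
        intro u v x
        simp only [dd]
        ring
      simp only [S, hL, hQ, expand, Finset.sum_add_distrib, ← Finset.mul_sum]
      ring
    rw [hfun]
    have hd : HasDerivAt (fun ε : ℝ => S A + ε * L + ε ^ 2 * Q) L 0 := by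
      have h1 : HasDerivAt (fun ε : ℝ => ε) 1 0 := hasDerivAt_id 0
      have h2 : HasDerivAt (fun ε : ℝ => ε ^ 2) (2 * 0 ^ 1) 0 := hasDerivAt_pow 2 0
      have := ((hasDerivAt_const (0:ℝ) (S A)).add (h1.mul_const L)).add (h2.mul_const Q)
      simpa [Pi.add_def] using this
    rw [hd.deriv]
    -- now compute L
    have keylem : ∀ h : V → V → ℝ,
        ∑ v : V, ∑ x : V, h v x * η a b v x = h a b - h b a := by
      intro h
      have inner : ∀ v : V, ∑ x : V, h v x * η a b v x
          = (if v = a then h a b else 0) - (if v = b then h b a else 0) := by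
        intro v
        by_cases hva : v = a
        · subst hva
          simp [η, hab, Ne.symm hab, mul_ite, Finset.sum_ite_eq']
        · by_cases hvb : v = b
          · subst hvb
            simp [η, hva, mul_ite, Finset.sum_ite_eq']
          · simp [η, hva, hvb]
      rw [Finset.sum_congr rfl fun v _ => inner v, Finset.sum_sub_distrib]
      simp
    have rearr1 : ∀ f : V → V → V → ℝ,
        ∑ u : V, ∑ v : V, ∑ x : V, f u v x * η a b v x
          = (∑ u : V, f u a b) - (∑ u : V, f u b a) := by
      intro f
      rw [Finset.sum_comm]
      have step : ∀ v : V, ∑ u : V, ∑ x : V, f u v x * η a b v x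
          = ∑ x : V, (∑ u : V, f u v x) * η a b v x := by
        intro v
        rw [Finset.sum_comm]
        simp [Finset.sum_mul]
      rw [Finset.sum_congr rfl fun v _ => step v, keylem (fun v x => ∑ u : V, f u v x)]
    have rearr2 : ∀ f : V → V → V → ℝ,
        ∑ u : V, ∑ v : V, ∑ x : V, f u v x * η a b u x
          = (∑ v : V, f a v b) - (∑ v : V, f b v a) := by
      intro f
      have step : ∀ u : V, ∑ v : V, ∑ x : V, f u v x * η a b u x
          = ∑ x : V, (∑ v : V, f u v x) * η a b u x := by
        intro u
        rw [Finset.sum_comm]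
        simp [Finset.sum_mul]
      rw [Finset.sum_congr rfl fun u _ => step u, keylem (fun u x => ∑ v : V, f u v x)]
    have rearr3 : ∀ f : V → V → V → ℝ,
        ∑ u : V, ∑ v : V, ∑ x : V, f u v x * η a b u v
          = (∑ x : V, f a b x) - (∑ x : V, f b a x) := by
      intro f
      have step : ∀ u : V, ∑ v : V, ∑ x : V, f u v x * η a b u v
          = ∑ v : V, (∑ x : V, f u v x) * η a b u v := by
        intro u
        simp [Finset.sum_mul]
      rw [Finset.sum_congr rfl fun u _ => step u,
        keylem (fun u v => ∑ x : V, f u v x)]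
    -- dd symmetry facts
    have hdd1 : ∀ u : V, dd A u a b = dd A a b u := by
      intro u; simp only [dd]; rw [hA u b, hA u a]; ring
    have hdd2 : ∀ u : V, dd A u b a = - dd A a b u := by
      intro u; simp only [dd]; rw [hA u a, hA u b, hA b a]; ring
    have hdd3 : ∀ v : V, dd A a v b = - dd A a b v := by
      intro v; simp only [dd]; rw [hA v b]; ring
    have hdd4 : ∀ v : V, dd A b v a = dd A a b v := by
      intro v; simp only [dd]; rw [hA v a, hA b a]; ring
    have hdd5 : ∀ x : V, dd A b a x = - dd A a b x := by
      intro x; simp only [dd]; rw [hA b a]; ring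
    -- w symmetry facts
    have hwf1 : ∀ u : V, w u a b = w a b u := fun u => by
      rw [hw₁ u a b, hw₂ a u b]
    have hwf2 : ∀ u : V, w u b a = w a b u := fun u => by
      rw [hw₁ u b a, hw₂ b u a, hw₁ b a u]
    have hwf3 : ∀ v : V, w a v b = w a b v := fun v => by rw [hw₂ a v b]
    have hwf4 : ∀ v : V, w b v a = w a b v := fun v => by
      rw [hw₂ b v a, hw₁ b a v]
    have hwf5 : ∀ x : V, w b a x = w a b x := fun x => by rw [hw₁ b a x]
    have split : ∀ u v x : V,
        2 * w u v x * dd A u v x * dd (η a b) u v x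
          = (2 * w u v x * dd A u v x) * η a b v x
            - (2 * w u v x * dd A u v x) * η a b u x
            + (2 * w u v x * dd A u v x) * η a b u v := by
      intro u v x; simp only [dd]; ring
    rw [hL]
    rw [Finset.sum_congr rfl fun u _ => Finset.sum_congr rfl fun v _ =>
      Finset.sum_congr rfl fun x _ => split u v x]
    simp only [Finset.sum_add_distrib, Finset.sum_sub_distrib]
    rw [rearr1 (fun u v x => 2 * w u v x * dd A u v x),
        rearr2 (fun u v x => 2 * w u v x * dd A u v x),
        rearr3 (fun u v x => 2 * w u v x * dd A u v x)]
    have e1 : ∑ u : V, 2 * w u a b * dd A u a b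
        = 2 * ∑ x : V, w a b x * dd A a b x := by
      rw [Finset.mul_sum]
      exact Finset.sum_congr rfl fun u _ => by rw [hwf1 u, hdd1 u]; ring
    have e2 : ∑ u : V, 2 * w u b a * dd A u b a
        = -2 * ∑ x : V, w a b x * dd A a b x := by
      rw [Finset.mul_sum]
      exact Finset.sum_congr rfl fun u _ => by rw [hwf2 u, hdd2 u]; ring
    have e3 : ∑ v : V, 2 * w a v b * dd A a v b
        = -2 * ∑ x : V, w a b x * dd A a b x := by
      rw [Finset.mul_sum]
      exact Finset.sum_congr rfl fun v _ => by rw [hwf3 v, hdd3 v]; ring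
    have e4 : ∑ v : V, 2 * w b v a * dd A b v a
        = 2 * ∑ x : V, w a b x * dd A a b x := by
      rw [Finset.mul_sum]
      exact Finset.sum_congr rfl fun v _ => by rw [hwf4 v, hdd4 v]; ring
    have e5 : ∑ x : V, 2 * w a b x * dd A a b x
        = 2 * ∑ x : V, w a b x * dd A a b x := by
      rw [Finset.mul_sum]
      exact Finset.sum_congr rfl fun x _ => by ring
    have e6 : ∑ x : V, 2 * w b a x * dd A b a x
        = -2 * ∑ x : V, w a b x * dd A a b x := by
      rw [Finset.mul_sum]
      exact Finset.sum_congr rfl fun x _ => by rw [hwf5 x, hdd5 x]; ring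
    rw [e1, e2, e3, e4, e5, e6]
    ring
  refine ⟨key, fun A hA => ⟨fun h a b hab => ?_, fun h a b hab => ?_⟩⟩
  · rw [← key A hA a b hab]; exact h a b hab
  · rw [key A hA a b hab]; exact h a b hab
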